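/- Let A be an n×n real Hurwitz matrix, τ > 0, Q an n×n real symmetric positive-semidefinite matrix, and R a symmetric positive-semidefinite matrix with R·R = 2Q. Let B = (I − τA)⁻¹, M = [[A, R], [0, −τ⁻¹I]], D = [[0, 0], [0, (2τ²)⁻¹I]], and let Σ = [[C, Σxη], [Σηx, Σηη]] be a symmetric 2n×2n real matrix satisfying M·Σ + Σ·Mᵀ + 2D = 0. Then the function s ↦ (top-left n×n block of exp(s·M)·Σ) is differentiable at s = 0 with derivative equal to A·C + Q·Bᵀ. -/

import Mathlib

open Matrix Polynomial NormedSpace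

section AuxDeriv

attribute [local instance] Matrix.linftyOpNormedRing Matrix.linftyOpNormedAlgebra

private lemma aux_entry_deriv {m : Type*} [Fintype m] [DecidableEq m]
    (M S : Matrix m m ℝ) (i j : m) :
    HasDerivAt (fun s : ℝ => (NormedSpace.exp (s • M) * S) i j) ((M * S) i j) 0 := by
  have h1 : HasDerivAt (fun s : ℝ => NormedSpace.exp (s • M)) M 0 := by
    have h0 := hasDerivAt_exp_smul_const (𝕂 := ℝ) M 0
    simp only [zero_smul, NormedSpace.exp_zero, one_mul] at h0
    exact h0
  have h2 : HasDerivAt (fun s : ℝ => NormedSpace.exp (s • M) * S) (M * S) 0 := h1.mul_const S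
  let L : Matrix m m ℝ →ₗ[ℝ] ℝ :=
    { toFun := fun M => M i j, map_add' := fun _ _ => rfl, map_smul' := fun _ _ => rfl }
  exact (LinearMap.toContinuousLinearMap L).hasFDerivAt.comp_hasDerivAt 0 h2

end AuxDeriv

private lemma aux_eval_charpoly {m : Type*} [Fintype m] [DecidableEq m] (M : Matrix m m ℂ)
    (μ : ℂ) : (M.charpoly).eval μ = (μ • (1 : Matrix m m ℂ) - M).det := by
  rw [Matrix.charpoly, eval_det, matPolyEquiv_charmatrix]
  congr 1
  rw [eval_sub, eval_X, eval_C]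
  congr 1
  rw [Matrix.scalar_apply]
  ext i j
  simp [Matrix.one_apply, Matrix.diagonal_apply]

private lemma aux_det_unit {n : ℕ} (A : Matrix (Fin n) (Fin n) ℝ) (τ : ℝ) (hτ : 0 < τ)
    (hA : ∀ μ : ℂ, ((A.map (Complex.ofReal)).charpoly).IsRoot μ → μ.re < 0) :
    IsUnit (1 - τ • A).det := by
  rw [isUnit_iff_ne_zero]
  intro h0
  set A' := A.map (Complex.ofReal) with hA'
  have hmap : (1 - τ • A).map ⇑Complex.ofRealHom = 1 - (τ : ℂ) • A' := by
    ext i j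
    simp [hA', Matrix.one_apply, Matrix.map_apply, apply_ite (⇑Complex.ofRealHom)]
    split <;> simp
  have hC : (1 - (τ : ℂ) • A').det = 0 := by
    rw [← hmap]
    have hd := RingHom.map_det (Complex.ofRealHom) (1 - τ • A)
    rw [RingHom.mapMatrix_apply] at hd
    rw [← hd, h0, map_zero]
  have hτ' : (τ : ℂ) ≠ 0 := by exact_mod_cast hτ.ne'
  have hroot : (A'.charpoly).IsRoot ((τ : ℂ)⁻¹) := by
    rw [IsRoot, aux_eval_charpoly]
    have hfac : ((τ : ℂ)⁻¹ • (1 : Matrix (Fin n) (Fin n) ℂ) - A')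
        = (τ : ℂ)⁻¹ • (1 - (τ : ℂ) • A') := by
      rw [smul_sub, smul_smul, inv_mul_cancel₀ hτ', one_smul]
    rw [hfac, Matrix.det_smul, hC, mul_zero]
  have hlt := hA _ hroot
  rw [← Complex.ofReal_inv] at hlt
  simp only [Complex.ofReal_re] at hlt
  exact absurd hlt (not_lt.mpr (le_of_lt (inv_pos.mpr hτ)))

attribute [local instance] Matrix.normedAddCommGroup Matrix.normedSpace

/-- With the notation of the colored-noise system: the top-left block of `exp (s • M) * Σ`
is differentiable at `s = 0` with derivative `A * C + Q * Bᵀ`, where `B = (I - τ • A)⁻¹`. -/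
theorem correlation_first_derivative {n : ℕ} (A Q R : Matrix (Fin n) (Fin n) ℝ) (τ : ℝ)
    (hτ : 0 < τ)
    (hA : ∀ μ : ℂ, ((A.map (Complex.ofReal)).charpoly).IsRoot μ → μ.re < 0)
    (hQ : Q.PosSemidef) (hR : R.PosSemidef) (hRQ : R * R = (2 : ℝ) • Q)
    (C Sxη Sηx Sηη : Matrix (Fin n) (Fin n) ℝ)
    (hsymm : (fromBlocks C Sxη Sηx Sηη)ᵀ = fromBlocks C Sxη Sηx Sηη)
    (hlyap :
      fromBlocks A R 0 (-τ⁻¹ • 1) * fromBlocks C Sxη Sηx Sηη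
        + fromBlocks C Sxη Sηx Sηη * (fromBlocks A R 0 (-τ⁻¹ • 1))ᵀ
        + (2 : ℝ) • fromBlocks 0 0 0 ((2 * τ ^ 2)⁻¹ • 1) = 0) :
    HasDerivAt
      (fun s : ℝ =>
        ((NormedSpace.exp (s • fromBlocks A R 0 (-τ⁻¹ • 1)) * fromBlocks C Sxη Sηx Sηη :
            Matrix (Fin n ⊕ Fin n) (Fin n ⊕ Fin n) ℝ)).toBlocks₁₁)
      (A * C + Q * ((1 - τ • A)⁻¹)ᵀ) 0 := by
  have hτ0 : τ ≠ 0 := hτ.ne'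
  -- extract block equations from the Lyapunov equation
  have h := hlyap
  rw [Matrix.fromBlocks_transpose, Matrix.fromBlocks_multiply, Matrix.fromBlocks_multiply,
    Matrix.fromBlocks_smul, Matrix.fromBlocks_add, Matrix.fromBlocks_add,
    ← Matrix.fromBlocks_zero] at h
  have h21 := congrArg Matrix.toBlocks₂₁ h
  have h22 := congrArg Matrix.toBlocks₂₂ h
  simp only [Matrix.toBlocks_fromBlocks₂₁, Matrix.toBlocks_fromBlocks₂₂] at h21 h22
  -- solve for Sηη
  have hSηη : Sηη = (2 * τ)⁻¹ • 1 := by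
    ext i j
    have h' := congrFun (congrFun h22 i) j
    simp [Matrix.add_apply, Matrix.mul_apply, Matrix.smul_apply, Matrix.one_apply,
      Matrix.transpose_apply, Finset.sum_ite_eq, Finset.sum_ite_eq', smul_eq_mul,
      mul_comm, apply_ite] at h' ⊢
    rcases eq_or_ne i j with rfl | hij
    · simp at h' ⊢
      field_simp at h' ⊢
      nlinarith [h', mul_pos hτ hτ, mul_pos (mul_pos hτ hτ) hτ]
    · simp [hij, Ne.symm hij] at h' ⊢
      exact h'.resolve_right hτ0
  -- solve for Sηx * (1 - τ • Aᵀ)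
  have hRsymm : Rᵀ = R := by
    rw [← Matrix.conjTranspose_eq_transpose_of_trivial]
    exact hR.1
  have hkey : Sηx * (1 - τ • Aᵀ) = (2 : ℝ)⁻¹ • R := by
    have h21' : -τ⁻¹ • Sηx + (Sηx * Aᵀ + (2 * τ)⁻¹ • R) = 0 := by
      have := h21
      rw [hSηη] at this
      simpa [Matrix.smul_mul, Matrix.mul_smul, hRsymm, smul_smul] using this
    have h3 : Sηx + (-(τ • (Sηx * Aᵀ)) + -((2:ℝ)⁻¹ • R)) = 0 := by
      have h5 := congrArg (fun X : Matrix (Fin n) (Fin n) ℝ => (-τ) • X) h21'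
      simp only [smul_add, smul_zero, smul_smul, neg_smul, smul_neg] at h5
      have e1 : -τ * τ⁻¹ = (-1 : ℝ) := by field_simp
      have e3 : -τ * (2 * τ)⁻¹ = (-(2:ℝ)⁻¹ : ℝ) := by
        field_simp
      rw [e1, e3] at h5
      simpa [neg_smul] using h5
    rw [Matrix.mul_sub, Matrix.mul_one, Matrix.mul_smul, ← sub_eq_zero]
    rw [← h3]
    abel
  -- invertibility
  have hdet : IsUnit (1 - τ • A).det := aux_det_unit A τ hτ hA
  have hdetT : IsUnit (1 - τ • Aᵀ).det := by
    have : (1 - τ • Aᵀ) = (1 - τ • A)ᵀ := by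
      rw [Matrix.transpose_sub, Matrix.transpose_smul, Matrix.transpose_one]
    rw [this, Matrix.det_transpose]
    exact hdet
  -- R * Sηx = Q * B ᵀ
  have hfinal : R * Sηx = Q * ((1 - τ • A)⁻¹)ᵀ := by
    have hS : Sηx = ((2 : ℝ)⁻¹ • R) * (1 - τ • Aᵀ)⁻¹ := by
      rw [← hkey, Matrix.mul_nonsing_inv_cancel_right _ _ hdetT]
    have hTT : (1 - τ • Aᵀ) = (1 - τ • A)ᵀ := by
      rw [Matrix.transpose_sub, Matrix.transpose_smul, Matrix.transpose_one]
    rw [hS, ← Matrix.mul_assoc, Matrix.mul_smul, hRQ, smul_smul, hTT,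
      ← Matrix.transpose_nonsing_inv]
    norm_num [Matrix.smul_mul]
  -- the derivative itself
  have hderiv : A * C + Q * ((1 - τ • A)⁻¹)ᵀ
      = (fromBlocks A R (0 : Matrix (Fin n) (Fin n) ℝ)
          (-τ⁻¹ • (1 : Matrix (Fin n) (Fin n) ℝ)) * fromBlocks C Sxη Sηx Sηη).toBlocks₁₁ := by
    rw [Matrix.fromBlocks_multiply, Matrix.toBlocks_fromBlocks₁₁, hfinal]
  rw [hderiv]
  refine hasDerivAt_pi.2 (fun i => ?_)
  refine hasDerivAt_pi.2 (fun j => ?_)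
  exact aux_entry_deriv (m := Fin n ⊕ Fin n) (fromBlocks A R 0 (-τ⁻¹ • 1))
    (fromBlocks C Sxη Sηx Sηη) (Sum.inl i) (Sum.inl j)
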